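/- Let p ∈ (1/2, 1], let ε satisfy 0 < ε < (2p − 1)/(1 − p) if p < 1 (ε > 0 arbitrary if p = 1), and define Λ_n = Σ_{k=1}^n β_k with β_k = k^{−p} Π_{s=2}^{k} (1 − s^{−p})^{−1}. Then lim_{n→∞} log(Λ_n) / n^{p/(1+ε)} = 0. -/

import Mathlib

open Filter MeasureTheory Topology

theorem stmt_12 (p : ℝ) (hp0 : 1 / 2 < p) (hp1 : p ≤ 1)
    (ε : ℝ) (hε0 : 0 < ε) (hε1 : p < 1 → ε < (2 * p - 1) / (1 - p))
    (β : ℕ → ℝ)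
    (hβ : ∀ k : ℕ, β k = (k : ℝ) ^ (-p) * ∏ s ∈ Finset.Icc 2 k, (1 - (s : ℝ) ^ (-p))⁻¹)
    (Λ : ℕ → ℝ) (hΛ : ∀ n : ℕ, Λ n = ∑ k ∈ Finset.Icc 1 n, β k) :
    Tendsto (fun n : ℕ => Real.log (Λ n) / (n : ℝ) ^ (p / (1 + ε))) atTop (𝓝 0) := by
  have hp0' : (0:ℝ) < p := by linarith
  have hε1' : (0:ℝ) < 1 + ε := by linarith
  set a := p / (1 + ε) with ha
  have ha0 : 0 < a := div_pos hp0' hε1'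
  have hpa : 1 - p < a := by
    rcases lt_or_eq_of_le hp1 with h | h
    · have h2 := hε1 h
      have h1p : (0:ℝ) < 1 - p := by linarith
      rw [lt_div_iff₀ h1p] at h2
      rw [ha, lt_div_iff₀ hε1']
      nlinarith
    · rw [← h]
      simpa using ha0
  set δ := a - (1 - p) with hδ
  have hδ0 : 0 < δ := by simp only [hδ]; linarith
  -- basic facts about the factors
  have h34 : ∀ s : ℕ, 2 ≤ s → (s:ℝ) ^ (-p) ≤ 3/4 := by
    intro s hs
    have h1 : (s:ℝ) ^ (-p) ≤ (2:ℝ) ^ (-p) := by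
      apply Real.rpow_le_rpow_of_nonpos (by norm_num) (by exact_mod_cast hs) (by linarith)
    have h2 : (2:ℝ) ^ (-p) ≤ (2:ℝ) ^ (-(1/2) : ℝ) :=
      Real.rpow_le_rpow_of_exponent_le one_le_two (by linarith)
    have h3 : ((2:ℝ) ^ (-(1/2) : ℝ)) ^ (2:ℕ) = 1/2 := by
      rw [← Real.rpow_natCast ((2:ℝ) ^ (-(1/2):ℝ)) 2, ← Real.rpow_mul (by norm_num)]
      norm_num
    have h4 : (0:ℝ) ≤ (2:ℝ) ^ (-(1/2) : ℝ) := Real.rpow_nonneg (by norm_num) _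
    nlinarith
  have hpos : ∀ s : ℕ, 2 ≤ s → (0:ℝ) < 1 - (s:ℝ) ^ (-p) := fun s hs => by
    have := h34 s hs; linarith
  have hnn : ∀ s : ℕ, 2 ≤ s → (0:ℝ) ≤ (s:ℝ) ^ (-p) := fun s _ => Real.rpow_nonneg (by positivity) _
  -- each factor is ≥ 1
  have hfac1 : ∀ s : ℕ, 2 ≤ s → (1:ℝ) ≤ (1 - (s:ℝ) ^ (-p))⁻¹ := by
    intro s hs
    rw [le_inv_comm₀ one_pos (hpos s hs)]
    have := hnn s hs; linarith [hnn s hs]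
  -- positivity of β and Λ
  have hβpos : ∀ k : ℕ, 1 ≤ k → 0 < β k := by
    intro k hk
    rw [hβ k]
    apply mul_pos
    · apply Real.rpow_pos_of_pos; exact_mod_cast hk
    · apply Finset.prod_pos
      intro s hs
      exact inv_pos.mpr (hpos s (Finset.mem_Icc.mp hs).1)
  have hΛ1 : ∀ n : ℕ, 1 ≤ n → 1 ≤ Λ n := by
    intro n hn
    rw [hΛ n]
    have hβ1 : β 1 = 1 := by rw [hβ 1]; norm_num
    calc (1:ℝ) = β 1 := hβ1.symm
      _ ≤ ∑ k ∈ Finset.Icc 1 n, β k :=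
        Finset.single_le_sum (fun k hk => (hβpos k (Finset.mem_Icc.mp hk).1).le)
          (Finset.mem_Icc.mpr ⟨le_refl 1, hn⟩)
  -- the key upper bound
  have hub : ∀ n : ℕ, 1 ≤ n →
      Real.log (Λ n) ≤ 5 * ((n:ℝ) ^ (1 - p) * (1 + Real.log n)) := by
    intro n hn
    have hn0 : (0:ℝ) < n := by exact_mod_cast hn
    set P := ∏ s ∈ Finset.Icc 2 n, (1 - (s:ℝ) ^ (-p))⁻¹ with hP
    have hPpos : 0 < P := Finset.prod_pos fun s hs =>
      inv_pos.mpr (hpos s (Finset.mem_Icc.mp hs).1)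
    have hβle : ∀ k ∈ Finset.Icc 1 n, β k ≤ P := by
      intro k hk
      obtain ⟨hk1, hkn⟩ := Finset.mem_Icc.mp hk
      rw [hβ k]
      have h1 : (k:ℝ) ^ (-p) ≤ 1 :=
        Real.rpow_le_one_of_one_le_of_nonpos (by exact_mod_cast hk1) (by linarith)
      have h2 : (∏ s ∈ Finset.Icc 2 k, (1 - (s:ℝ) ^ (-p))⁻¹) ≤ P := by
        rw [hP]
        have hsub : Finset.Icc 2 k ⊆ Finset.Icc 2 n := Finset.Icc_subset_Icc le_rfl hkn
        rw [← Finset.prod_sdiff hsub]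
        have hone : (1:ℝ) ≤ ∏ s ∈ Finset.Icc 2 n \ Finset.Icc 2 k, (1 - (s:ℝ) ^ (-p))⁻¹ := by
          have h := Finset.prod_le_prod (s := Finset.Icc 2 n \ Finset.Icc 2 k)
            (f := fun _ : ℕ => (1:ℝ)) (g := fun s : ℕ => (1 - (s:ℝ) ^ (-p))⁻¹)
            (fun _ _ => zero_le_one)
            (fun s hs => hfac1 s (Finset.mem_Icc.mp (Finset.mem_sdiff.mp hs).1).1)
          simpa using h
        have hpr : (0:ℝ) ≤ ∏ s ∈ Finset.Icc 2 k, (1 - (s:ℝ) ^ (-p))⁻¹ :=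
          Finset.prod_nonneg fun s hs => (inv_pos.mpr (hpos s (Finset.mem_Icc.mp hs).1)).le
        exact le_mul_of_one_le_left hpr hone
      have h3 : (0:ℝ) ≤ ∏ s ∈ Finset.Icc 2 k, (1 - (s:ℝ) ^ (-p))⁻¹ :=
        Finset.prod_nonneg fun s hs => (inv_pos.mpr (hpos s (Finset.mem_Icc.mp hs).1)).le
      calc (k:ℝ) ^ (-p) * ∏ s ∈ Finset.Icc 2 k, (1 - (s:ℝ) ^ (-p))⁻¹
          ≤ 1 * P := mul_le_mul h1 h2 h3 zero_le_one
        _ = P := one_mul P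
    have hΛub : Λ n ≤ (n:ℝ) * P := by
      rw [hΛ n]
      calc ∑ k ∈ Finset.Icc 1 n, β k ≤ ∑ _k ∈ Finset.Icc 1 n, P :=
            Finset.sum_le_sum hβle
        _ = (n:ℝ) * P := by rw [Finset.sum_const, Nat.card_Icc]; simp [nsmul_eq_mul]
    have hΛpos : 0 < Λ n := lt_of_lt_of_le one_pos (hΛ1 n hn)
    have hlog1 : Real.log (Λ n) ≤ Real.log n + Real.log P := by
      calc Real.log (Λ n) ≤ Real.log ((n:ℝ) * P) := Real.log_le_log hΛpos hΛub
        _ = Real.log n + Real.log P := Real.log_mul (ne_of_gt hn0) (ne_of_gt hPpos)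
    have hlogP : Real.log P ≤ ∑ s ∈ Finset.Icc 2 n, 4 * (s:ℝ) ^ (-p) := by
      rw [hP, Real.log_prod (fun s hs =>
        ne_of_gt (inv_pos.mpr (hpos s (Finset.mem_Icc.mp hs).1)))]
      apply Finset.sum_le_sum
      intro s hs
      have hs2 := (Finset.mem_Icc.mp hs).1
      have hx34 := h34 s hs2
      have hx0 := hnn s hs2
      have hxp := hpos s hs2
      have hlog : Real.log ((1 - (s:ℝ) ^ (-p))⁻¹) ≤ (1 - (s:ℝ) ^ (-p))⁻¹ - 1 :=
        Real.log_le_sub_one_of_pos (inv_pos.mpr hxp)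
      have hinv : (1 - (s:ℝ) ^ (-p))⁻¹ ≤ 1 + 4 * (s:ℝ) ^ (-p) := by
        rw [inv_eq_one_div, div_le_iff₀ hxp]
        nlinarith
      linarith
    have hterm : ∀ s ∈ Finset.Icc 2 n, 4 * (s:ℝ) ^ (-p) ≤ 4 * ((n:ℝ) ^ (1-p) * (s:ℝ)⁻¹) := by
      intro s hs
      obtain ⟨hs2, hsn⟩ := Finset.mem_Icc.mp hs
      have hs0 : (0:ℝ) < s := by positivity
      have : (s:ℝ) ^ (-p) = (s:ℝ) ^ (1-p) * (s:ℝ)⁻¹ := by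
        rw [← Real.rpow_neg_one (s:ℝ), ← Real.rpow_add hs0]
        ring_nf
      rw [this]
      have h1 : (s:ℝ) ^ (1-p) ≤ (n:ℝ) ^ (1-p) :=
        Real.rpow_le_rpow hs0.le (by exact_mod_cast hsn) (by linarith)
      have h2 : (0:ℝ) ≤ (s:ℝ)⁻¹ := by positivity
      nlinarith
    have hsum : ∑ s ∈ Finset.Icc 2 n, 4 * (s:ℝ) ^ (-p)
        ≤ 4 * ((n:ℝ) ^ (1-p) * (1 + Real.log n)) := by
      calc ∑ s ∈ Finset.Icc 2 n, 4 * (s:ℝ) ^ (-p)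
          ≤ ∑ s ∈ Finset.Icc 2 n, 4 * ((n:ℝ) ^ (1-p) * (s:ℝ)⁻¹) :=
            Finset.sum_le_sum hterm
        _ = 4 * ((n:ℝ) ^ (1-p)) * ∑ s ∈ Finset.Icc 2 n, (s:ℝ)⁻¹ := by
            rw [Finset.mul_sum]; apply Finset.sum_congr rfl; intro s _; ring
        _ ≤ 4 * ((n:ℝ) ^ (1-p)) * ∑ s ∈ Finset.Icc 1 n, (s:ℝ)⁻¹ := by
            apply mul_le_mul_of_nonneg_left _ (by positivity)
            apply Finset.sum_le_sum_of_subset_of_nonneg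
              (Finset.Icc_subset_Icc (by norm_num) le_rfl)
            intro s _ _; positivity
        _ ≤ 4 * ((n:ℝ) ^ (1-p)) * (1 + Real.log n) := by
            apply mul_le_mul_of_nonneg_left _ (by positivity)
            have := harmonic_le_one_add_log n
            have heq : (harmonic n : ℝ) = ∑ s ∈ Finset.Icc 1 n, (s:ℝ)⁻¹ := by
              rw [harmonic_eq_sum_Icc]; push_cast; rfl
            rw [← heq]; exact_mod_cast this
        _ = 4 * ((n:ℝ) ^ (1-p) * (1 + Real.log n)) := by ring
    have hn1p : (1:ℝ) ≤ (n:ℝ) ^ (1-p) := by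
      have := Real.rpow_le_rpow zero_le_one (by exact_mod_cast hn : (1:ℝ) ≤ n) (by linarith : (0:ℝ) ≤ 1-p)
      rwa [Real.one_rpow] at this
    have hlogn : 0 ≤ Real.log n := Real.log_nonneg (by exact_mod_cast hn)
    nlinarith [hn1p, hlogn]
  -- the comparison function tends to 0
  have hG : Tendsto (fun x : ℝ => 5 * ((1 + Real.log x) / x ^ δ)) atTop (𝓝 0) := by
    have t1 : Tendsto (fun x : ℝ => Real.log x / x ^ δ) atTop (𝓝 0) :=
      (isLittleO_log_rpow_atTop hδ0).tendsto_div_nhds_zero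
    have t2 : Tendsto (fun x : ℝ => x ^ (-δ)) atTop (𝓝 0) := tendsto_rpow_neg_atTop hδ0
    have t3 : Tendsto (fun x : ℝ => x ^ (-δ) + Real.log x / x ^ δ) atTop (𝓝 (0 + 0)) :=
      t2.add t1
    rw [add_zero] at t3
    have : Tendsto (fun x : ℝ => 5 * (x ^ (-δ) + Real.log x / x ^ δ)) atTop (𝓝 (5 * 0)) :=
      t3.const_mul 5
    rw [mul_zero] at this
    apply this.congr'
    filter_upwards [eventually_gt_atTop (0:ℝ)] with x hx
    rw [Real.rpow_neg hx.le]
    have hxδ : (0:ℝ) < x ^ δ := Real.rpow_pos_of_pos hx δ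
    field_simp
  have hGn : Tendsto (fun n : ℕ => 5 * ((1 + Real.log n) / (n:ℝ) ^ δ)) atTop (𝓝 0) :=
    hG.comp tendsto_natCast_atTop_atTop
  apply squeeze_zero' (f := fun n : ℕ => Real.log (Λ n) / (n:ℝ) ^ a)
    (g := fun n : ℕ => 5 * ((1 + Real.log n) / (n:ℝ) ^ δ)) _ _ hGn
  · filter_upwards [eventually_ge_atTop 1] with n hn
    have hn0 : (0:ℝ) < n := by exact_mod_cast hn
    apply div_nonneg (Real.log_nonneg (hΛ1 n hn)) (Real.rpow_nonneg hn0.le a)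
  · filter_upwards [eventually_ge_atTop 1] with n hn
    have hn0 : (0:ℝ) < n := by exact_mod_cast hn
    have hub' := hub n hn
    have hrw : (n:ℝ) ^ (1-p) / (n:ℝ) ^ a = ((n:ℝ) ^ δ)⁻¹ := by
      rw [← Real.rpow_sub hn0, ← Real.rpow_neg hn0.le, hδ]
      ring_nf
    have hna : (0:ℝ) < (n:ℝ) ^ a := Real.rpow_pos_of_pos hn0 a
    have hnδ : (0:ℝ) < (n:ℝ) ^ δ := Real.rpow_pos_of_pos hn0 δ
    rw [div_le_iff₀ hna]
    calc Real.log (Λ n) ≤ 5 * ((n:ℝ) ^ (1-p) * (1 + Real.log n)) := hub'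
      _ = 5 * ((1 + Real.log n) / (n:ℝ) ^ δ) * (n:ℝ) ^ a := by
          have : (n:ℝ) ^ (1-p) = ((n:ℝ) ^ δ)⁻¹ * (n:ℝ) ^ a := by
            rw [← hrw]; field_simp
          rw [this]; ring
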